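/- arXiv:1907.09687 — 2 statements merged into one kernel-verified Lean document; each statement's English description precedes it below -/
import Mathlib

section
/- Let f: (X,B₁,b₁) → (Y,B₂,b₂) be a coarse proximity isomorphism with coarse inverse g, and let φ₁, φ₂ be the induced weak asymptotic resemblances. Then for all A, B ⊆ X: A φ₁ B if and only if f(A) φ₂ f(B). -/
open Set

universe u
variable {X : Type u}

/-- The axioms of a coarse proximity structure: a bornology `B` (contains singletons,
closed under subsets and finite unions) and a relation `b` satisfying symmetry,
unboundedness of related sets, relatedness of sets with unbounded intersection,
the union axiom, and the strong axiom. -/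
structure IsCoarseProximity (B : Set (Set X)) (b : Set X → Set X → Prop) : Prop where
  singleton_mem : ∀ x : X, {x} ∈ B
  subset_mem : ∀ A C : Set X, A ∈ B → C ⊆ A → C ∈ B
  union_mem : ∀ A C : Set X, A ∈ B → C ∈ B → A ∪ C ∈ B
  symm : ∀ A C : Set X, b A C → b C A
  unbounded_of_rel : ∀ A C : Set X, b A C → A ∉ B ∧ C ∉ B
  rel_of_inter : ∀ A C : Set X, A ∩ C ∉ B → b A C
  union_iff : ∀ A C D : Set X, b (A ∪ C) D ↔ b A D ∨ b C D
  strong : ∀ A C : Set X, ¬ b A C → ∃ E : Set X, ¬ b A E ∧ ¬ b (univ \ E) C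

/-- A coarse proximity space structure on `X`. -/
structure CoarseProximity (X : Type u) where
  B : Set (Set X)
  b : Set X → Set X → Prop
  isCP : IsCoarseProximity B b

/-- The weak asymptotic resemblance induced by a coarse proximity. -/
def phi (cp : CoarseProximity X) (A C : Set X) : Prop :=
  (∀ C' ⊆ C, C' ∉ cp.B → cp.b A C') ∧ (∀ A' ⊆ A, A' ∉ cp.B → cp.b A' C)

variable {Y : Type u}

/-- A coarse proximity map: sends bounded sets to bounded sets and preserves `b`. -/
def IsCPMap (cp1 : CoarseProximity X) (cp2 : CoarseProximity Y) (f : X → Y) : Prop :=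
  (∀ A ∈ cp1.B, f '' A ∈ cp2.B) ∧ ∀ A C : Set X, cp1.b A C → cp2.b (f '' A) (f '' C)

/-- Two maps into a coarse proximity space are close if images of every subset
are `φ`-related. -/
def CloseMaps {Z : Type u} (cp : CoarseProximity Y) (f g : Z → Y) : Prop :=
  ∀ A : Set Z, phi cp (f '' A) (g '' A)


lemma b_mono (cp : CoarseProximity X) {A C D : Set X} (h : cp.b A C) (hCD : C ⊆ D) :
    cp.b A D := by
  have h1 : cp.b (C ∪ (D \ C)) A :=
    (cp.isCP.union_iff _ _ _).2 (Or.inl (cp.isCP.symm _ _ h))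
  rw [Set.union_diff_cancel hCD] at h1
  exact cp.isCP.symm _ _ h1

lemma phi_symm (cp : CoarseProximity X) {A C : Set X} (h : phi cp A C) : phi cp C A :=
  ⟨fun A' hA' hb => cp.isCP.symm _ _ (h.2 A' hA' hb),
   fun C' hC' hb => cp.isCP.symm _ _ (h.1 C' hC' hb)⟩

lemma phi_trans_aux (cp : CoarseProximity X) {A B C : Set X}
    (hAB : phi cp A B) (hBC : phi cp B C) {C' : Set X} (hC' : C' ⊆ C)
    (hC'ub : C' ∉ cp.B) : cp.b A C' := by
  by_contra hnb
  obtain ⟨E, hAE, hEC'⟩ := cp.isCP.strong A C' hnb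
  have hBC' : cp.b B C' := hBC.1 C' hC' hC'ub
  have hsplit : cp.b ((B ∩ E) ∪ (B \ E)) C' := by
    rwa [Set.inter_union_diff]
  rcases (cp.isCP.union_iff _ _ _).1 hsplit with h1 | h2
  · have hub : B ∩ E ∉ cp.B := (cp.isCP.unbounded_of_rel _ _ h1).1
    have hb := hAB.1 (B ∩ E) Set.inter_subset_left hub
    exact hAE (b_mono cp hb Set.inter_subset_right)
  · have hb : cp.b C' (univ \ E) :=
      b_mono cp (cp.isCP.symm _ _ h2) (fun x hx => ⟨trivial, hx.2⟩)
    exact hEC' (cp.isCP.symm _ _ hb)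

lemma phi_trans (cp : CoarseProximity X) {A B C : Set X}
    (hAB : phi cp A B) (hBC : phi cp B C) : phi cp A C :=
  ⟨fun C' h1 h2 => phi_trans_aux cp hAB hBC h1 h2,
   fun A' h1 h2 => cp.isCP.symm _ _
     (phi_trans_aux cp (phi_symm cp hBC) (phi_symm cp hAB) h1 h2)⟩

lemma cpmap_half {Y : Type u} {cp1 : CoarseProximity X} {cp2 : CoarseProximity Y}
    {f : X → Y} (hf : IsCPMap cp1 cp2 f) {A C : Set X} (h : phi cp1 A C) :
    ∀ C' ⊆ f '' C, C' ∉ cp2.B → cp2.b (f '' A) C' := by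
  intro C' hsub hub
  have hDimg : f '' (C ∩ f ⁻¹' C') = C' := by
    apply subset_antisymm
    · rintro y ⟨x, ⟨-, hx⟩, rfl⟩; exact hx
    · intro y hy
      obtain ⟨x, hxC, rfl⟩ := hsub hy
      exact ⟨x, ⟨hxC, hy⟩, rfl⟩
  have hDub : C ∩ f ⁻¹' C' ∉ cp1.B := fun hb => hub (hDimg ▸ hf.1 _ hb)
  have hb := hf.2 A _ (h.1 _ Set.inter_subset_left hDub)
  rwa [hDimg] at hb

lemma cpmap_phi {Y : Type u} {cp1 : CoarseProximity X} {cp2 : CoarseProximity Y}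
    {f : X → Y} (hf : IsCPMap cp1 cp2 f) {A C : Set X} (h : phi cp1 A C) :
    phi cp2 (f '' A) (f '' C) :=
  ⟨cpmap_half hf h,
   fun A' h1 h2 => cp2.isCP.symm _ _ (cpmap_half hf (phi_symm cp1 h) A' h1 h2)⟩

/-- a coarse proximity isomorphism `f` (with coarse inverse `g`)
satisfies `A φ₁ B ↔ f(A) φ₂ f(B)`. -/
theorem iso_preserves_phi {Y : Type u} (cp1 : CoarseProximity X) (cp2 : CoarseProximity Y)
    (f : X → Y) (g : Y → X) (hf : IsCPMap cp1 cp2 f) (hg : IsCPMap cp2 cp1 g)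
    (hgf : CloseMaps cp1 (g ∘ f) id) (hfg : CloseMaps cp2 (f ∘ g) id)
    (A C : Set X) : phi cp1 A C ↔ phi cp2 (f '' A) (f '' C) := by
  constructor
  · exact fun h => cpmap_phi hf h
  · intro h
    have h1 : phi cp1 (g '' (f '' A)) (g '' (f '' C)) := cpmap_phi hg h
    rw [← Set.image_comp, ← Set.image_comp] at h1
    have hA : phi cp1 ((g ∘ f) '' A) A := by simpa using hgf A
    have hC : phi cp1 ((g ∘ f) '' C) C := by simpa using hgf C
    exact phi_trans cp1 (phi_trans cp1 (phi_symm cp1 hA) h1) hC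
end

section
/- Let (X,B,b) be a coarse proximity space. Define A ≪ B iff A b̄ (X\B), A ⊑ B iff for all C, A b C implies B b C, and A ≪_w B iff there is C with A ≪ C ⊑ B. Then A ≪_w B if and only if A' ⊆ int(B') in the boundary UX. -/
open Set

universe u
variable {X : Type u}

/-- The discrete extension of the coarse proximity `b`. -/
def deltaExt (cp : CoarseProximity X) (A C : Set X) : Prop :=
  (A ∩ C).Nonempty ∨ cp.b A C

/-- A cluster in the proximity space given by the discrete extension of `b`:
any two members are close, any set close to all members is a member, and a union
belongs only if one of the pieces does. -/
structure IsCluster (cp : CoarseProximity X) (σ : Set (Set X)) : Prop where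
  close : ∀ A ∈ σ, ∀ C ∈ σ, deltaExt cp A C
  mem_of_close : ∀ C : Set X, (∀ A ∈ σ, deltaExt cp C A) → C ∈ σ
  union_cases : ∀ A C : Set X, A ∪ C ∈ σ → A ∈ σ ∨ C ∈ σ

/-- The boundary `𝒰X` of the coarse proximity space: clusters (in the Smirnov
compactification of the discrete extension) containing no bounded set. -/
def UX (cp : CoarseProximity X) : Set (Set (Set X)) :=
  {σ | IsCluster cp σ ∧ ∀ A ∈ σ, A ∉ cp.B}

/-- The trace `A' = cl_𝔛(A) ∩ 𝒰X` of `A ⊆ X` in the boundary; a cluster of the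
boundary lies in the closure of `A` in the Smirnov compactification iff `A` is a
member of the cluster. -/
def trace (cp : CoarseProximity X) (A : Set X) : Set (Set (Set X)) :=
  {σ ∈ UX cp | A ∈ σ}

/-- Relative closure in a subspace `Y` of the Smirnov compactification: a cluster
`σ ∈ Y` lies in the closure of `S ⊆ Y` iff every subset of `X` absorbing `S`
(i.e. belonging to every cluster of `S`) belongs to `σ`. -/
def clRel (Y S : Set (Set (Set X))) : Set (Set (Set X)) :=
  {σ ∈ Y | ∀ C : Set X, (∀ τ ∈ S, C ∈ τ) → C ∈ σ}

/-- A subset of `Y` is relatively closed iff it contains its relative closure. -/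
def relClosed (Y K : Set (Set (Set X))) : Prop :=
  K ⊆ Y ∧ clRel Y K ⊆ K

/-- Interior in the boundary `𝒰X`. -/
def intU (cp : CoarseProximity X) (S : Set (Set (Set X))) : Set (Set (Set X)) :=
  UX cp \ clRel (UX cp) (UX cp \ S)

/-- Closed subsets of the boundary `𝒰X`. -/
def IsClosedU (cp : CoarseProximity X) (K : Set (Set (Set X))) : Prop :=
  relClosed (UX cp) K

/-- Open subsets of the boundary `𝒰X`. -/
def IsOpenU (cp : CoarseProximity X) (U : Set (Set (Set X))) : Prop :=
  U ⊆ UX cp ∧ IsClosedU cp (UX cp \ U)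

/-- `A ⊑ B` iff every set coarsely close to `A` is coarsely close to `B`. -/
def sqsub (cp : CoarseProximity X) (A C : Set X) : Prop :=
  ∀ D : Set X, cp.b A D → cp.b C D

/-- `A ≪ B`: `B` is a coarse neighborhood of `A`. -/
def ll (cp : CoarseProximity X) (A C : Set X) : Prop :=
  ¬ cp.b A (Set.univ \ C)

/-- `A ≪_w B` iff there is `C` with `A ≪ C ⊑ B`. -/
def llw (cp : CoarseProximity X) (A C : Set X) : Prop :=
  ∃ D : Set X, ll cp A D ∧ sqsub cp D C

section Aux

variable (cp : CoarseProximity X)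

lemma b_mono_left {A A' C : Set X} (h : cp.b A C) (hs : A ⊆ A') : cp.b A' C := by
  have h2 := (cp.isCP.union_iff A A' C).2 (Or.inl h)
  rwa [union_eq_self_of_subset_left hs] at h2

lemma b_mono_right {A C C' : Set X} (h : cp.b A C) (hs : C ⊆ C') : cp.b A C' :=
  cp.isCP.symm _ _ (b_mono_left cp (cp.isCP.symm _ _ h) hs)

lemma not_b_of_mem_left {A C : Set X} (hA : A ∈ cp.B) : ¬ cp.b A C :=
  fun h => (cp.isCP.unbounded_of_rel _ _ h).1 hA

lemma empty_mem_B [Nonempty X] : (∅ : Set X) ∈ cp.B := by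
  obtain ⟨x⟩ := ‹Nonempty X›
  exact cp.isCP.subset_mem _ _ (cp.isCP.singleton_mem x) (empty_subset _)

lemma delta_symm {A C : Set X} (h : deltaExt cp A C) : deltaExt cp C A := by
  rcases h with h | h
  · exact Or.inl (by rwa [inter_comm])
  · exact Or.inr (cp.isCP.symm _ _ h)

lemma delta_mono_left {A A' C : Set X} (h : deltaExt cp A C) (hs : A ⊆ A') :
    deltaExt cp A' C := by
  rcases h with h | h
  · exact Or.inl (h.mono (inter_subset_inter_left _ hs))
  · exact Or.inr (b_mono_left cp h hs)

lemma delta_mono_right {A C C' : Set X} (h : deltaExt cp A C) (hs : C ⊆ C') :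
    deltaExt cp A C' :=
  delta_symm cp (delta_mono_left cp (delta_symm cp h) hs)

lemma delta_union {A C D : Set X} :
    deltaExt cp (A ∪ C) D ↔ deltaExt cp A D ∨ deltaExt cp C D := by
  constructor
  · rintro (h | h)
    · rw [union_inter_distrib_right] at h
      rcases union_nonempty.1 h with h | h
      · exact Or.inl (Or.inl h)
      · exact Or.inr (Or.inl h)
    · rcases (cp.isCP.union_iff A C D).1 h with h | h
      · exact Or.inl (Or.inr h)
      · exact Or.inr (Or.inr h)
  · rintro (h | h)
    · exact delta_mono_left cp h subset_union_left
    · exact delta_mono_left cp h subset_union_right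

lemma delta_strong {M C : Set X} (h : ¬ deltaExt cp M C) :
    ∃ E : Set X, ¬ deltaExt cp M E ∧ ¬ deltaExt cp (univ \ E) C := by
  have hMC : ¬ (M ∩ C).Nonempty := fun hn => h (Or.inl hn)
  have hb : ¬ cp.b M C := fun hb => h (Or.inr hb)
  obtain ⟨E₀, hME₀, hE₀C⟩ := cp.isCP.strong M C hb
  refine ⟨(E₀ ∪ C) \ M, ?_, ?_⟩
  · rintro (hn | hbb)
    · rcases hn with ⟨x, hxM, hxE⟩
      exact hxE.2 hxM
    · have h2 : cp.b M (E₀ ∪ C) := b_mono_right cp hbb diff_subset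
      rcases (cp.isCP.union_iff E₀ C M).1 (cp.isCP.symm _ _ h2) with h1 | h1
      · exact hME₀ (cp.isCP.symm _ _ h1)
      · exact hb (cp.isCP.symm _ _ h1)
  · rintro (hn | hbb)
    · rcases hn with ⟨x, hx1, hxC⟩
      exact hx1.2 ⟨Or.inr hxC, fun hxM => hMC ⟨x, hxM, hxC⟩⟩
    · have hsub : univ \ ((E₀ ∪ C) \ M) ⊆ (univ \ E₀) ∪ M := by
        rintro x ⟨-, hx⟩
        by_cases hxM : x ∈ M
        · exact Or.inr hxM
        · exact Or.inl ⟨trivial, fun hxE₀ => hx ⟨Or.inl hxE₀, hxM⟩⟩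
      have h2 : cp.b ((univ \ E₀) ∪ M) C := b_mono_left cp hbb hsub
      rcases (cp.isCP.union_iff _ _ _).1 h2 with h1 | h1
      · exact hE₀C h1
      · exact hb h1

lemma cluster_univ_mem {σ : Set (Set X)} (hσ : σ ∈ UX cp) : univ ∈ σ := by
  apply hσ.1.mem_of_close
  intro M hM
  exact Or.inr (cp.isCP.rel_of_inter _ _ (by rw [univ_inter]; exact hσ.2 M hM))

lemma cluster_pairwise_b {σ : Set (Set X)} {M N : Set X} (hσ : σ ∈ UX cp)
    (hM : M ∈ σ) (hN : N ∈ σ) : cp.b M N := by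
  by_cases hI : M ∩ N ∈ cp.B
  · have h1 : M \ N ∈ σ ∨ M ∩ N ∈ σ :=
      hσ.1.union_cases _ _ (by rwa [diff_union_inter M N])
    have h2 : M \ N ∈ σ := h1.resolve_right (fun h => hσ.2 _ h hI)
    have h3 : deltaExt cp (M \ N) N := hσ.1.close _ h2 _ hN
    rcases h3 with h | h
    · rcases h with ⟨x, hx⟩
      exact (hx.1.2 hx.2).elim
    · exact b_mono_left cp h diff_subset
  · exact cp.isCP.rel_of_inter _ _ hI

lemma cluster_sqsub {σ : Set (Set X)} {D B' : Set X} (hσ : σ ∈ UX cp)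
    (hD : D ∈ σ) (h : sqsub cp D B') : B' ∈ σ := by
  apply hσ.1.mem_of_close
  intro M hM
  exact Or.inr (h M (cluster_pairwise_b cp hσ hD hM))

/-- The cluster associated to an ultrafilter. -/
def clusterOf (𝒰 : Ultrafilter X) : Set (Set X) :=
  {S | ∀ U ∈ 𝒰, deltaExt cp S U}

lemma mem_clusterOf_of_mem {𝒰 : Ultrafilter X} {U : Set X} (hU : U ∈ 𝒰) :
    U ∈ clusterOf cp 𝒰 := by
  intro V hV
  exact Or.inl (Filter.nonempty_of_mem (Filter.inter_mem hU hV))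

lemma clusterOf_mem_UX {𝒰 : Ultrafilter X} (h : ∀ U ∈ 𝒰, U ∉ cp.B) :
    clusterOf cp 𝒰 ∈ UX cp := by
  have hub : ∀ S ∈ clusterOf cp 𝒰, S ∉ cp.B := by
    intro S hS hSB
    have hS𝒰 : S ∈ 𝒰 := by
      by_contra hS𝒰
      have hc : Sᶜ ∈ 𝒰 := Ultrafilter.compl_mem_iff_notMem.2 hS𝒰
      rcases hS Sᶜ hc with hn | hb
      · rw [inter_compl_self] at hn
        exact hn.ne_empty rfl
      · exact not_b_of_mem_left cp hSB hb
    exact h S hS𝒰 hSB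
  refine ⟨⟨?_, ?_, ?_⟩, hub⟩
  · intro S hS T hT
    by_contra hST
    obtain ⟨E, hSE, hEC⟩ := delta_strong cp hST
    rcases Ultrafilter.mem_or_compl_mem 𝒰 E with hE | hE
    · exact hSE (hS E hE)
    · have h2 := hT Eᶜ hE
      rw [compl_eq_univ_diff] at h2
      exact hEC (delta_symm cp h2)
  · intro C hC U hU
    exact hC U (mem_clusterOf_of_mem cp hU)
  · intro S T hST
    by_contra hcon
    push_neg at hcon
    have hS : ∃ U ∈ 𝒰, ¬ deltaExt cp S U := by
      by_contra hx
      push_neg at hx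
      exact hcon.1 hx
    have hT : ∃ U ∈ 𝒰, ¬ deltaExt cp T U := by
      by_contra hx
      push_neg at hx
      exact hcon.2 hx
    obtain ⟨U₁, hU₁, hSU₁⟩ := hS
    obtain ⟨U₂, hU₂, hTU₂⟩ := hT
    have h3 := hST (U₁ ∩ U₂) (Filter.inter_mem hU₁ hU₂)
    rcases (delta_union cp).1 h3 with h4 | h4
    · exact hSU₁ (delta_mono_right cp h4 inter_subset_left)
    · exact hTU₂ (delta_mono_right cp h4 inter_subset_right)

lemma exists_cluster_pair [Nonempty X] {A C : Set X} (h : cp.b A C) :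
    ∃ σ ∈ UX cp, A ∈ σ ∧ C ∈ σ := by
  set 𝒢 : Set (Set X) := {S | ¬ cp.b (A ∩ Sᶜ) C} with h𝒢
  have hmono : ∀ {S S' : Set X}, S ∈ 𝒢 → S ⊆ S' → S' ∈ 𝒢 := by
    intro S S' hS hsub hb
    exact hS (b_mono_left cp hb (inter_subset_inter_right _ (compl_subset_compl.2 hsub)))
  let F : Filter X :=
    { sets := 𝒢
      univ_sets := by
        show ¬ cp.b (A ∩ univᶜ) C
        rw [compl_univ, inter_empty]
        exact not_b_of_mem_left cp (empty_mem_B cp)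
      sets_of_superset := fun hS hsub => hmono hS hsub
      inter_sets := by
        intro S T hS hT
        show ¬ cp.b (A ∩ (S ∩ T)ᶜ) C
        rw [compl_inter, inter_union_distrib_left]
        intro hb
        rcases (cp.isCP.union_iff _ _ _).1 hb with h1 | h1
        · exact hS h1
        · exact hT h1 }
  have hFmem : ∀ {S : Set X}, S ∈ F ↔ S ∈ 𝒢 := Iff.rfl
  have hne : F.NeBot := by
    rw [Filter.neBot_iff]
    intro hbot
    have hbm : (∅ : Set X) ∈ F := by rw [hbot]; exact Filter.mem_bot
    have h2 : ¬ cp.b (A ∩ (∅ : Set X)ᶜ) C := hbm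
    rw [compl_empty, inter_univ] at h2
    exact h2 h
  obtain ⟨𝒰, h𝒰⟩ := Ultrafilter.exists_le F
  have hmem𝒰 : ∀ {S : Set X}, S ∈ 𝒢 → S ∈ 𝒰 := fun hS => h𝒰 hS
  have hunb : ∀ U ∈ 𝒰, U ∉ cp.B := by
    intro U hU hUB
    have hUc : Uᶜ ∈ 𝒢 := by
      show ¬ cp.b (A ∩ Uᶜᶜ) C
      rw [compl_compl]
      exact not_b_of_mem_left cp (cp.isCP.subset_mem _ _ hUB inter_subset_right)
    exact (Ultrafilter.compl_mem_iff_notMem.1 (hmem𝒰 hUc)) hU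
  have hbUC : ∀ U ∈ 𝒰, cp.b U C := by
    intro U hU
    by_contra hbU
    have hUc : Uᶜ ∈ 𝒢 := by
      show ¬ cp.b (A ∩ Uᶜᶜ) C
      rw [compl_compl]
      exact fun hx => hbU (b_mono_left cp hx inter_subset_right)
    exact (Ultrafilter.compl_mem_iff_notMem.1 (hmem𝒰 hUc)) hU
  have hA𝒰 : A ∈ 𝒰 := by
    apply hmem𝒰
    show ¬ cp.b (A ∩ Aᶜ) C
    rw [inter_compl_self]
    exact not_b_of_mem_left cp (empty_mem_B cp)
  refine ⟨clusterOf cp 𝒰, clusterOf_mem_UX cp hunb, mem_clusterOf_of_mem cp hA𝒰, ?_⟩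
  intro U hU
  exact Or.inr (cp.isCP.symm _ _ (hbUC U hU))

lemma llw_of_trace_subset [Nonempty X] {A B : Set X}
    (hA : trace cp A ⊆ intU cp (trace cp B)) : llw cp A B := by
  by_contra hcon
  have h2 : ∀ D : Set X, sqsub cp D B → cp.b A (univ \ D) := by
    intro D hD
    by_contra hb
    exact hcon ⟨D, hb, hD⟩
  set ℰ : Set (Set X) := {E | sqsub cp Eᶜ B} with hℰdef
  have hbAE : ∀ E ∈ ℰ, cp.b A E := by
    intro E hE
    have h3 := h2 Eᶜ hE
    rwa [← compl_eq_univ_diff, compl_compl] at h3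
  have hunivℰ : univ ∈ ℰ := by
    intro F hF
    rw [compl_univ] at hF
    exact absurd hF (not_b_of_mem_left cp (empty_mem_B cp))
  have hinterℰ : ∀ E₁ ∈ ℰ, ∀ E₂ ∈ ℰ, E₁ ∩ E₂ ∈ ℰ := by
    intro E₁ h₁ E₂ h₂ F hF
    rw [compl_inter] at hF
    rcases (cp.isCP.union_iff _ _ _).1 hF with h | h
    · exact h₁ F h
    · exact h₂ F h
  have hcoboundℰ : ∀ E : Set X, Eᶜ ∈ cp.B → E ∈ ℰ := by
    intro E hE F hF
    exact absurd hF (not_b_of_mem_left cp hE)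
  set 𝒢 : Set (Set X) := {S | ∃ E ∈ ℰ, ¬ cp.b (E ∩ Sᶜ) A} with h𝒢
  let F : Filter X :=
    { sets := 𝒢
      univ_sets := by
        refine ⟨univ, hunivℰ, ?_⟩
        rw [compl_univ, inter_empty]
        exact not_b_of_mem_left cp (empty_mem_B cp)
      sets_of_superset := by
        rintro S S' ⟨E, hE, hb⟩ hsub
        exact ⟨E, hE, fun hx =>
          hb (b_mono_left cp hx (inter_subset_inter_right _ (compl_subset_compl.2 hsub)))⟩
      inter_sets := by
        rintro S T ⟨E₁, hE₁, hb₁⟩ ⟨E₂, hE₂, hb₂⟩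
        refine ⟨E₁ ∩ E₂, hinterℰ _ hE₁ _ hE₂, ?_⟩
        intro hb
        have hsub : (E₁ ∩ E₂) ∩ (S ∩ T)ᶜ ⊆ (E₁ ∩ Sᶜ) ∪ (E₂ ∩ Tᶜ) := by
          rintro x ⟨⟨hx1, hx2⟩, hx3⟩
          rw [mem_compl_iff, mem_inter_iff, not_and_or] at hx3
          rcases hx3 with h | h
          · exact Or.inl ⟨hx1, h⟩
          · exact Or.inr ⟨hx2, h⟩
        rcases (cp.isCP.union_iff _ _ _).1 (b_mono_left cp hb hsub) with h | h
        · exact hb₁ h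
        · exact hb₂ h }
  have hFmem : ∀ {S : Set X}, S ∈ F ↔ S ∈ 𝒢 := Iff.rfl
  have hne : F.NeBot := by
    rw [Filter.neBot_iff]
    intro hbot
    have hbm : (∅ : Set X) ∈ F := by rw [hbot]; exact Filter.mem_bot
    rw [hFmem] at hbm
    obtain ⟨E, hE, hb⟩ := hbm
    rw [compl_empty, inter_univ] at hb
    exact hb (cp.isCP.symm _ _ (hbAE E hE))
  obtain ⟨𝒰, h𝒰⟩ := Ultrafilter.exists_le F
  have hmem𝒰 : ∀ {S : Set X}, S ∈ 𝒢 → S ∈ 𝒰 := fun hS => h𝒰 hS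
  have hℰ𝒢 : ∀ E ∈ ℰ, E ∈ 𝒢 := by
    intro E hE
    refine ⟨E, hE, ?_⟩
    rw [inter_compl_self]
    exact not_b_of_mem_left cp (empty_mem_B cp)
  have hunb : ∀ U ∈ 𝒰, U ∉ cp.B := by
    intro U hU hUB
    have hUc : Uᶜ ∈ 𝒢 := hℰ𝒢 _ (hcoboundℰ _ (by rwa [compl_compl]))
    exact (Ultrafilter.compl_mem_iff_notMem.1 (hmem𝒰 hUc)) hU
  have hbUA : ∀ U ∈ 𝒰, cp.b U A := by
    intro U hU
    by_contra hbU
    have hUc : Uᶜ ∈ 𝒢 := by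
      refine ⟨univ, hunivℰ, ?_⟩
      rw [compl_compl, univ_inter]
      exact hbU
    exact (Ultrafilter.compl_mem_iff_notMem.1 (hmem𝒰 hUc)) hU
  set σ : Set (Set X) := clusterOf cp 𝒰 with hσdef
  have hσUX : σ ∈ UX cp := clusterOf_mem_UX cp hunb
  have hAσ : A ∈ σ := by
    intro U hU
    exact Or.inr (cp.isCP.symm _ _ (hbUA U hU))
  have hℰσ : ∀ E ∈ ℰ, E ∈ σ := fun E hE => mem_clusterOf_of_mem cp (hmem𝒰 (hℰ𝒢 E hE))
  have hint := hA ⟨hσUX, hAσ⟩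
  obtain ⟨C, hCabs, hCσ⟩ : ∃ C : Set X, (∀ τ ∈ UX cp \ trace cp B, C ∈ τ) ∧ C ∉ σ := by
    by_contra hno
    push_neg at hno
    exact hint.2 ⟨hσUX, fun C hC => hno C hC⟩
  obtain ⟨M, hMσ, hMC⟩ : ∃ M ∈ σ, ¬ deltaExt cp C M := by
    by_contra hno
    push_neg at hno
    exact hCσ (hσUX.1.mem_of_close C hno)
  have hMC' : ¬ deltaExt cp M C := fun h => hMC (delta_symm cp h)
  obtain ⟨E, hME, hEC⟩ := delta_strong cp hMC'
  have hEℰ : E ∈ ℰ := by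
    intro Fs hFs
    by_contra hBF
    obtain ⟨τ, hτUX, hEτ, hFτ⟩ := exists_cluster_pair cp hFs
    have hBτ : B ∉ τ := fun hB => hBF (cluster_pairwise_b cp hτUX hB hFτ)
    have hCτ : C ∈ τ := hCabs τ ⟨hτUX, fun htr => hBτ htr.2⟩
    have h5 := hτUX.1.close _ hEτ _ hCτ
    rw [compl_eq_univ_diff] at h5
    exact hEC h5
  exact hME (hσUX.1.close _ hMσ _ (hℰσ E hEℰ))

lemma trace_subset_of_llw {A B : Set X} (h : llw cp A B) :
    trace cp A ⊆ intU cp (trace cp B) := by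
  obtain ⟨D, hll, hsq⟩ := h
  rintro σ ⟨hσUX, hAσ⟩
  refine ⟨hσUX, fun hcl => ?_⟩
  have hmem : univ \ D ∈ σ := by
    apply hcl.2 (univ \ D)
    rintro τ ⟨hτUX, hτB⟩
    have huniv : univ ∈ τ := cluster_univ_mem cp hτUX
    have h1 : D ∈ τ ∨ univ \ D ∈ τ :=
      hτUX.1.union_cases D (univ \ D) (by rwa [union_diff_cancel (subset_univ D)])
    rcases h1 with hD | hD
    · exact absurd ⟨hτUX, cluster_sqsub cp hτUX hD hsq⟩ hτB
    · exact hD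
  exact hll (cluster_pairwise_b cp hσUX hAσ hmem)

end Aux

/-- `A ≪_w B` iff `A' ⊆ int(B')` in the boundary `𝒰X`. -/
theorem llw_iff_trace_subset_int (cp : CoarseProximity X) (A B : Set X) :
    llw cp A B ↔ trace cp A ⊆ intU cp (trace cp B) := by
  constructor
  · exact trace_subset_of_llw cp
  · intro h
    rcases isEmpty_or_nonempty X with hX | hX
    · have hss : ∀ S T : Set X, S = T := fun S T => by
        ext x
        exact (hX.elim x)
      have key : ∀ S T : Set X, cp.b S T ↔ cp.b ∅ ∅ := fun S T => by
        rw [hss S ∅, hss T ∅]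
      by_cases hb : cp.b ∅ ∅
      · exfalso
        have hσ : (univ : Set (Set X)) ∈ UX cp := by
          refine ⟨⟨?_, ?_, ?_⟩, ?_⟩
          · intro S _ T _
            exact Or.inr ((key S T).2 hb)
          · intro C _
            trivial
          · intro S T _
            exact Or.inl trivial
          · intro S _ hSB
            rw [hss S ∅] at hSB
            exact (cp.isCP.unbounded_of_rel _ _ hb).1 hSB
        have hint := h (⟨hσ, trivial⟩ : (univ : Set (Set X)) ∈ trace cp A)
        exact hint.2 ⟨hσ, fun C _ => trivial⟩
      · refine ⟨∅, fun hc => hb ((key _ _).1 hc), ?_⟩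
        intro F hF
        exact absurd ((key _ _).1 hF) hb
    · exact llw_of_trace_subset cp h
end
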